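/- arXiv:0805.0389 — 4 statements merged into one kernel-verified Lean document; each statement's English description precedes it below -/
import Mathlib

section
/- Let f : ℝ^m → ℝ be a function, P ⊆ ℝ^m, and suppose d is a subgradient of f at x ∈ P. Suppose ĥ ∈ ℝ^m satisfies ĥ_i ∈ [d_i − ω w_i − ξ/(2m), d_i + ω w_i + ξ/(2m)] for all i, where w ∈ ℝ₊^m is a fixed nonnegative vector, ω, ξ ≥ 0, and suppose that for every x ∈ P we have x ≥ 0, x_i ≤ 1 for all i, and f(x) ≥ w · x. Then ĥ is an (ω, ξ)-subgradient of f at x, i.e., for every y ∈ P, f(y) − f(x) ≥ ĥ · (y − x) − ω f(y) − ω f(x) − ξ. -/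
/-- If `d` is a subgradient of `f` at `x ∈ P`, `ĥ` approximates `d` componentwise
within `ω wᵢ + ξ/(2m)`, and on `P` points lie in `[0,1]^m` with `f(x) ≥ w · x`,
then `ĥ` is an `(ω, ξ)`-subgradient of `f` at `x`. -/
theorem stmt1 {m : ℕ} (hm : 0 < m) (f : (Fin m → ℝ) → ℝ) (P : Set (Fin m → ℝ))
    (x : Fin m → ℝ) (hx : x ∈ P) (d dhat w : Fin m → ℝ) (ω ξ : ℝ)
    (hω : 0 ≤ ω) (hξ : 0 ≤ ξ) (hw : ∀ i, 0 ≤ w i)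
    (hd : ∀ v, f v - f x ≥ ∑ i, d i * (v i - x i))
    (hdhat : ∀ i, d i - ω * w i - ξ / (2 * m) ≤ dhat i ∧
      dhat i ≤ d i + ω * w i + ξ / (2 * m))
    (hP : ∀ z ∈ P, (∀ i, 0 ≤ z i ∧ z i ≤ 1) ∧ (∑ i, w i * z i) ≤ f z) :
    ∀ y ∈ P, f y - f x ≥ (∑ i, dhat i * (y i - x i)) - ω * f y - ω * f x - ξ := by
  intro y hy
  obtain ⟨hxb, hxf⟩ := hP x hx
  obtain ⟨hyb, hyf⟩ := hP y hy
  have hδ : (0:ℝ) ≤ ξ / (2 * m) := by positivity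
  have key : ∀ i, (dhat i - d i) * (y i - x i) ≤ ω * w i * (x i + y i) + ξ / (2 * m) := by
    intro i
    obtain ⟨h1, h2⟩ := hdhat i
    obtain ⟨hx0, hx1⟩ := hxb i
    obtain ⟨hy0, hy1⟩ := hyb i
    have hww : 0 ≤ ω * w i := mul_nonneg hω (hw i)
    rcases le_total (x i) (y i) with h | h
    · nlinarith [mul_nonneg hww (sub_nonneg.2 h), mul_nonneg hδ (sub_nonneg.2 h)]
    · nlinarith [mul_nonneg hww (sub_nonneg.2 h), mul_nonneg hδ (sub_nonneg.2 h)]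
  have hsum : ∑ i, (dhat i - d i) * (y i - x i) ≤
      ∑ i, (ω * w i * (x i + y i) + ξ / (2 * m)) :=
    Finset.sum_le_sum fun i _ => key i
  have hsplit : ∑ i, (ω * w i * (x i + y i) + ξ / (2 * m))
      = ω * (∑ i, w i * x i) + ω * (∑ i, w i * y i) + ξ / 2 := by
    have hm' : (m:ℝ) ≠ 0 := Nat.cast_ne_zero.2 hm.ne'
    rw [Finset.sum_add_distrib, Finset.sum_const, Finset.card_univ, Fintype.card_fin,
      nsmul_eq_mul]
    have h3 : ∑ i, ω * w i * (x i + y i)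
        = ω * (∑ i, w i * x i) + ω * (∑ i, w i * y i) := by
      rw [Finset.mul_sum, Finset.mul_sum, ← Finset.sum_add_distrib]
      exact Finset.sum_congr rfl fun i _ => by ring
    rw [h3]
    field_simp
  have h1 : ω * (∑ i, w i * x i) ≤ ω * f x := mul_le_mul_of_nonneg_left hxf hω
  have h2 : ω * (∑ i, w i * y i) ≤ ω * f y := mul_le_mul_of_nonneg_left hyf hω
  have hd' := hd y
  have hsumsplit : ∑ i, dhat i * (y i - x i)
      = (∑ i, d i * (y i - x i)) + ∑ i, (dhat i - d i) * (y i - x i) := by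
    rw [← Finset.sum_add_distrib]
    exact Finset.sum_congr rfl fun i _ => by ring
  linarith [hsum, hsplit ▸ hsum]
end

section
/- Fix ϱ ∈ (0, 1/4) and δ ∈ (0, 1/2). Let N < ln(1/δ − 1)/(4ϱ). Then there is no (possibly randomized) decision procedure using at most N independent tosses of a coin with unknown bias q that, for every q ∈ [0,1], outputs 'q ≤ ϱ' with probability at least 1 − δ whenever q ≤ ϱ and outputs 'q > 2ϱ' with probability at least 1 − δ whenever q > 2ϱ. In particular, the key inequality holds: for any q₀ > 2ϱ with q₀ < 1/4 sufficiently close to 2ϱ, (1 − 2ϱ)^N > δ/(1−δ), so any procedure correct on q = 0 with probability ≥ 1 − δ must output 'q ≤ ϱ' on seeing N tails, and hence errs with probability > δ on bias q₀. -/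
open Classical in
/-- Sampling lower bound for distinguishing a coin of bias `q ≤ ϱ` from one of bias
`q > 2ϱ`: no (possibly randomized) procedure using `N < ln(1/δ − 1)/(4ϱ)` tosses can
be correct with probability at least `1 − δ` on every bias `q ∈ [0,1]`.  A procedure
is modelled by the probability `D ω ∈ [0,1]` of answering "q ≤ ϱ" on toss-sequence
`ω`; the probability of answering "q ≤ ϱ" under bias `q` is
`∑ ω, (∏ i, if ω i then q else 1 − q) * D ω`. -/
theorem stmt2 (ϱ δ : ℝ) (hϱ : ϱ ∈ Set.Ioo (0 : ℝ) (1/4))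
    (hδ : δ ∈ Set.Ioo (0 : ℝ) (1/2))
    (N : ℕ) (hN : (N : ℝ) < Real.log (1/δ - 1) / (4 * ϱ)) :
    ¬ ∃ D : (Fin N → Bool) → ℝ,
      (∀ ω, 0 ≤ D ω ∧ D ω ≤ 1) ∧
      ∀ q ∈ Set.Icc (0 : ℝ) 1,
        (q ≤ ϱ →
          (1 - δ) ≤ ∑ ω : Fin N → Bool, (∏ i, if ω i then q else 1 - q) * D ω) ∧
        (2 * ϱ < q →
          (∑ ω : Fin N → Bool, (∏ i, if ω i then q else 1 - q) * D ω) ≤ δ) := by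
  obtain ⟨hϱ0, hϱ4⟩ := hϱ
  obtain ⟨hδ0, hδ2⟩ := hδ
  rintro ⟨D, hD, hcorr⟩
  -- Step 1: δ/(1-δ) < (1-2ϱ)^N
  have h4ϱ : (0:ℝ) < 4 * ϱ := by linarith
  have hlog : (N:ℝ) * (4 * ϱ) < Real.log (1/δ - 1) := by
    rw [← lt_div_iff₀ h4ϱ]; exact hN
  have hpos : (0:ℝ) < 1/δ - 1 := by
    have : 2 < 1/δ := by rw [lt_div_iff₀ hδ0]; linarith
    linarith
  have hexp : Real.exp ((N:ℝ) * (4 * ϱ)) < 1/δ - 1 := by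
    calc Real.exp ((N:ℝ) * (4 * ϱ)) < Real.exp (Real.log (1/δ - 1)) :=
          Real.exp_lt_exp.mpr hlog
      _ = 1/δ - 1 := Real.exp_log hpos
  have hkey : δ / (1 - δ) < (1 - 2*ϱ)^N := by
    have h1 : Real.exp (-(4*ϱ)) ≤ 1 - 2*ϱ := by
      have h2 : 1 + 2*ϱ ≤ Real.exp (2*ϱ) := by linarith [Real.add_one_le_exp (2*ϱ)]
      have h3 : Real.exp (-(4*ϱ)) * Real.exp (4*ϱ) = 1 := by
        rw [← Real.exp_add]; simp
      have h4 : Real.exp (4*ϱ) = Real.exp (2*ϱ) * Real.exp (2*ϱ) := by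
        rw [← Real.exp_add]; ring_nf
      have h5 : (0:ℝ) < Real.exp (-(4*ϱ)) := Real.exp_pos _
      have h6 : (1+2*ϱ)*(1+2*ϱ) ≤ Real.exp (2*ϱ) * Real.exp (2*ϱ) :=
        mul_le_mul h2 h2 (by linarith) (Real.exp_pos _).le
      have h7 := mul_le_mul_of_nonneg_left h6 (by linarith : (0:ℝ) ≤ 1 - 2*ϱ)
      have he4 : (1:ℝ) ≤ (1 - 2*ϱ) * Real.exp (4*ϱ) := by
        rw [h4]
        nlinarith [mul_pos hϱ0 hϱ0, mul_pos (mul_pos hϱ0 hϱ0) hϱ0]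
      nlinarith [Real.exp_pos (4*ϱ)]
    have h6 : Real.exp (-(4*ϱ))^N ≤ (1 - 2*ϱ)^N :=
      pow_le_pow_left₀ (Real.exp_pos _).le h1 N
    have h7 : Real.exp (-(4*ϱ))^N = Real.exp (-((N:ℝ) * (4*ϱ))) := by
      rw [← Real.exp_nat_mul]; ring_nf
    have h8 : δ / (1 - δ) < Real.exp (-((N:ℝ) * (4*ϱ))) := by
      rw [Real.exp_neg, div_lt_iff₀ (by linarith : (0:ℝ) < 1 - δ)]
      rw [inv_mul_eq_div, lt_div_iff₀ (Real.exp_pos _)]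
      have : δ * (1/δ - 1) = 1 - δ := by field_simp
      nlinarith [Real.exp_pos ((N:ℝ) * (4*ϱ))]
    calc δ / (1 - δ) < Real.exp (-((N:ℝ) * (4*ϱ))) := h8
      _ = Real.exp (-(4*ϱ))^N := h7.symm
      _ ≤ (1 - 2*ϱ)^N := h6
  -- Step 2: pick q₀ ∈ (2ϱ, 1/2) with δ/(1-δ) < (1-q₀)^N
  have hcont : Filter.Tendsto (fun q : ℝ => (1 - q)^N) (nhdsWithin (2*ϱ) (Set.Ioi (2*ϱ)))
      (nhds ((1 - 2*ϱ)^N)) := by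
    exact ((continuous_const.sub continuous_id).pow N).continuousWithinAt
  have hev1 : ∀ᶠ q in nhdsWithin (2*ϱ) (Set.Ioi (2*ϱ)), δ/(1-δ) < (1 - q)^N :=
    hcont.eventually_const_lt hkey
  have hev2 : ∀ᶠ q in nhdsWithin (2*ϱ) (Set.Ioi (2*ϱ)), q < 1/2 := by
    apply Filter.Eventually.filter_mono nhdsWithin_le_nhds
    exact Filter.Tendsto.eventually_lt_const (by linarith) Filter.tendsto_id
  have hev3 : ∀ᶠ q in nhdsWithin (2*ϱ) (Set.Ioi (2*ϱ)), q ∈ Set.Ioi (2*ϱ) :=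
    eventually_mem_nhdsWithin
  obtain ⟨q₀, ⟨hq1, hq2⟩, hq3⟩ := ((hev1.and hev2).and hev3).exists
  -- q₀ facts
  have hq0lo : 2*ϱ < q₀ := hq3
  have hq0' : 0 < q₀ := by linarith
  have hq0hi : q₀ ≤ 1 := by linarith
  -- Step 3: sum at q = 0 equals D (const false)
  have hzero := (hcorr 0 ⟨le_rfl, by norm_num⟩).1 hϱ0.le
  have hsum0 : (∑ ω : Fin N → Bool, (∏ i, if ω i then (0:ℝ) else 1 - 0) * D ω)
      = D (fun _ => false) := by
    rw [Finset.sum_eq_single (fun _ => false)]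
    · simp
    · intro ω _ hne
      have : ∃ i, ω i = true := by
        by_contra h
        push_neg at h
        exact hne (funext fun i => by simpa using h i)
      obtain ⟨i, hi⟩ := this
      rw [Finset.prod_eq_zero (Finset.mem_univ i) (by simp [hi]), zero_mul]
    · intro h; exact absurd (Finset.mem_univ _) h
  rw [hsum0] at hzero
  -- Step 4: sum at q₀ is ≥ (1-q₀)^N * D(const false)
  have hupper := (hcorr q₀ ⟨hq0'.le, hq0hi⟩).2 hq0lo
  have hterm : (1 - q₀)^N * D (fun _ => false)
      ≤ ∑ ω : Fin N → Bool, (∏ i, if ω i then q₀ else 1 - q₀) * D ω := by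
    have := Finset.single_le_sum (f := fun ω : Fin N → Bool =>
        (∏ i, if ω i then q₀ else 1 - q₀) * D ω)
      (fun ω _ => mul_nonneg (Finset.prod_nonneg fun i _ => by
        split <;> linarith) (hD ω).1) (Finset.mem_univ (fun _ => false))
    simpa using this
  -- Step 5: contradiction
  have hpow : (0:ℝ) < (1 - q₀)^N := pow_pos (by linarith) N
  have ha : δ/(1-δ) * (1-δ) < (1 - q₀)^N * (1-δ) :=
    mul_lt_mul_of_pos_right hq1 (by linarith)
  have hb : (1 - q₀)^N * (1-δ) ≤ (1 - q₀)^N * D (fun _ => false) :=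
    mul_le_mul_of_nonneg_left hzero hpow.le
  rw [div_mul_cancel₀ _ (by linarith : (1:ℝ) - δ ≠ 0)] at ha
  linarith
end

section
/- In the set cover setting, let f_A be as above and suppose (x, y_A, z_A, r_A) are nonnegative vectors satisfying: Σ_{S ∋ e}(x_S + y_{A,S}) + r_A ≥ 1 for all e ∈ A; Σ_{S ∋ e}(x_S + y_{A,S} + z_{A,S}) ≥ 1 for all e ∈ A; and Σ_S w^A_S y_{A,S} ≤ B. Fix ε > 0 and set x̂ = (1 + 1/ε)·x. Then: (a) f_A(x̂) ≤ Σ_S w^A_S (y_{A,S} + z_{A,S}); and (b) if r_A < 1/(1+ε), then f_A(x̂) ≤ (1 + 1/ε)·B. -/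
open Classical in
/-- Rounding step for risk-averse budgeted set cover: if `(x, y_A, z_A, r_A)` is a
nonnegative vector satisfying the two covering constraints and the budget constraint,
and `x̂ = (1 + 1/ε)·x`, then (a) `f_A(x̂) ≤ ∑_S w_S (y_{A,S} + z_{A,S})`, and
(b) if `r_A < 1/(1+ε)` then `f_A(x̂) ≤ (1 + 1/ε)·B`. -/
theorem stmt7 {U 𝒮 : Type*} [Fintype U] [Fintype 𝒮]
    (Sset : 𝒮 → Set U) (A : Set U) (w : 𝒮 → ℝ) (hw : ∀ S, 0 ≤ w S)
    (B ε : ℝ) (hB : 0 ≤ B) (hε : 0 < ε)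
    (fA : (𝒮 → ℝ) → ℝ)
    (hfA : ∀ x, fA x = sInf {c : ℝ | ∃ y : 𝒮 → ℝ, (∀ S, 0 ≤ y S) ∧
      (∀ e ∈ A, (1 - ∑ S ∈ Finset.univ.filter (fun S => e ∈ Sset S), x S) ≤
        ∑ S ∈ Finset.univ.filter (fun S => e ∈ Sset S), y S) ∧
      c = ∑ S, w S * y S})
    (x yA zA : 𝒮 → ℝ) (rA : ℝ)
    (hx : ∀ S, 0 ≤ x S) (hy : ∀ S, 0 ≤ yA S) (hz : ∀ S, 0 ≤ zA S) (hr : 0 ≤ rA)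
    (hcov1 : ∀ e ∈ A,
      1 ≤ (∑ S ∈ Finset.univ.filter (fun S => e ∈ Sset S), (x S + yA S)) + rA)
    (hcov2 : ∀ e ∈ A,
      1 ≤ ∑ S ∈ Finset.univ.filter (fun S => e ∈ Sset S), (x S + yA S + zA S))
    (hbudget : ∑ S, w S * yA S ≤ B) :
    fA (fun S => (1 + 1/ε) * x S) ≤ ∑ S, w S * (yA S + zA S) ∧
    (rA < 1 / (1 + ε) → fA (fun S => (1 + 1/ε) * x S) ≤ (1 + 1/ε) * B) := by
  have hεpos : (0:ℝ) < 1 + 1/ε := by positivity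
  rw [hfA]
  set T := {c : ℝ | ∃ y : 𝒮 → ℝ, (∀ S, 0 ≤ y S) ∧
      (∀ e ∈ A, (1 - ∑ S ∈ Finset.univ.filter (fun S => e ∈ Sset S),
        (fun S => (1 + 1/ε) * x S) S) ≤
        ∑ S ∈ Finset.univ.filter (fun S => e ∈ Sset S), y S) ∧
      c = ∑ S, w S * y S} with hT
  have hbdd : BddBelow T := by
    refine ⟨0, ?_⟩
    rintro c ⟨y, hy0, -, rfl⟩
    exact Finset.sum_nonneg fun S _ => mul_nonneg (hw S) (hy0 S)
  constructor
  · -- part (a)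
    apply csInf_le hbdd
    refine ⟨fun S => yA S + zA S, fun S => add_nonneg (hy S) (hz S), ?_, rfl⟩
    intro e he
    have h2 := hcov2 e he
    have hxs : ∑ S ∈ Finset.univ.filter (fun S => e ∈ Sset S), x S ≤
        ∑ S ∈ Finset.univ.filter (fun S => e ∈ Sset S), (1 + 1/ε) * x S := by
      apply Finset.sum_le_sum
      intro S hS
      have h1ε : (1:ℝ) ≤ 1 + 1/ε := by
        have : 0 < 1/ε := by positivity
        linarith
      nlinarith [mul_le_mul_of_nonneg_right h1ε (hx S)]
    simp only [Finset.sum_add_distrib] at h2 ⊢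
    linarith
  · intro hrA
    refine le_trans (csInf_le hbdd
      ⟨fun S => (1 + 1/ε) * yA S, fun S => mul_nonneg hεpos.le (hy S), ?_, rfl⟩) ?_
    · intro e he
      have h1 := hcov1 e he
      rw [Finset.sum_add_distrib] at h1
      have key : 1 - rA ≤ ∑ S ∈ Finset.univ.filter (fun S => e ∈ Sset S), x S +
          ∑ S ∈ Finset.univ.filter (fun S => e ∈ Sset S), yA S := by linarith
      have h4 : (1 + 1/ε) * (1 - rA) ≤ (1 + 1/ε) *
          (∑ S ∈ Finset.univ.filter (fun S => e ∈ Sset S), x S +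
           ∑ S ∈ Finset.univ.filter (fun S => e ∈ Sset S), yA S) :=
        mul_le_mul_of_nonneg_left key hεpos.le
      have h3 : (1 + 1/ε) * (1 - 1/(1+ε)) = 1 := by
        field_simp
        ring
      have h5 : (1:ℝ) ≤ (1 + 1/ε) * (1 - rA) := by nlinarith
      simp only [← Finset.mul_sum]
      nlinarith
    · have heq : ∑ S, w S * ((1 + 1/ε) * yA S) = (1 + 1/ε) * ∑ S, w S * yA S := by
        rw [Finset.mul_sum]; congr 1; funext S; ring
      rw [heq]
      exact mul_le_mul_of_nonneg_left hbudget hεpos.le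
end

section
/- Let (x*, {(y*_A, z*_A, r*_A)}) be any feasible solution to the risk-averse budgeted set cover LP with Σ_A p_A r*_A ≤ ρ ≤ 1, and suppose scenario costs satisfy w^A_S ≤ λ w^I_S for all A, S with q := Σ_{A ≠ ∅} p_A ≤ 1/λ. Then the solution with first stage x = 0 and, for each nonempty scenario A, second-stage vector z_A = z*_A + y*_A + x*, r_A = 1 (and all-zero for A = ∅) is feasible and has total cost at most that of (x*, {(y*_A, z*_A, r*_A)}). -/
open Classical in
/-- If `(x*, {(y*_A, z*_A, r*_A)})` is feasible for the risk-averse budgeted set cover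
LP with `∑_A p_A r*_A ≤ ρ ≤ 1`, `w^A_S ≤ λ w^I_S`, and the probability `q` of a
nonempty scenario satisfies `q ≤ min ρ (1/λ)`, then the solution with `x = 0`,
`y_A = 0`, and for each nonempty scenario `z_A = z*_A + y*_A + x*`, `r_A = 1`
(all-zero on the empty scenario) is feasible and has total cost at most that of
`(x*, {(y*_A, z*_A, r*_A)})`. -/
theorem stmt14 {U 𝒮 ι : Type*} [Fintype U] [Fintype 𝒮] [Fintype ι]
    (Sset : 𝒮 → Set U) (elem : ι → Finset U)
    (p : ι → ℝ) (hp0 : ∀ a, 0 ≤ p a) (hp1 : ∑ a, p a = 1)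
    (wI : 𝒮 → ℝ) (wA : ι → 𝒮 → ℝ) (hwI : ∀ S, 0 ≤ wI S) (hwA : ∀ a S, 0 ≤ wA a S)
    (lam B ρ : ℝ) (hlam : 0 < lam) (hρ : ρ ≤ 1) (hB : 0 ≤ B)
    (hlw : ∀ a S, wA a S ≤ lam * wI S)
    (hq : (∑ a ∈ Finset.univ.filter (fun a => elem a ≠ ∅), p a) ≤ min ρ (1/lam))
    (xs : 𝒮 → ℝ) (ys zs : ι → 𝒮 → ℝ) (rs : ι → ℝ)
    (hxs : ∀ S, 0 ≤ xs S) (hys : ∀ a S, 0 ≤ ys a S) (hzs : ∀ a S, 0 ≤ zs a S)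
    (hrs : ∀ a, 0 ≤ rs a)
    (hprob : ∑ a, p a * rs a ≤ ρ)
    (hcov1 : ∀ a, ∀ e ∈ elem a,
      1 ≤ (∑ S ∈ Finset.univ.filter (fun S => e ∈ Sset S), (xs S + ys a S)) + rs a)
    (hcov2 : ∀ a, ∀ e ∈ elem a,
      1 ≤ ∑ S ∈ Finset.univ.filter (fun S => e ∈ Sset S), (xs S + ys a S + zs a S))
    (hbud : ∀ a, ∑ S, wA a S * ys a S ≤ B) :
    let x' : 𝒮 → ℝ := fun _ => 0
    let y' : ι → 𝒮 → ℝ := fun _ _ => 0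
    let z' : ι → 𝒮 → ℝ := fun a S => if elem a = ∅ then 0 else zs a S + ys a S + xs S
    let r' : ι → ℝ := fun a => if elem a = ∅ then 0 else 1
    (∀ S, 0 ≤ x' S) ∧ (∀ a S, 0 ≤ y' a S) ∧ (∀ a S, 0 ≤ z' a S) ∧ (∀ a, 0 ≤ r' a) ∧
    (∑ a, p a * r' a ≤ ρ) ∧
    (∀ a, ∀ e ∈ elem a,
      1 ≤ (∑ S ∈ Finset.univ.filter (fun S => e ∈ Sset S), (x' S + y' a S)) + r' a) ∧
    (∀ a, ∀ e ∈ elem a,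
      1 ≤ ∑ S ∈ Finset.univ.filter (fun S => e ∈ Sset S), (x' S + y' a S + z' a S)) ∧
    (∀ a, ∑ S, wA a S * y' a S ≤ B) ∧
    ((∑ S, wI S * x' S) + ∑ a, p a * ∑ S, wA a S * (y' a S + z' a S) ≤
      (∑ S, wI S * xs S) + ∑ a, p a * ∑ S, wA a S * (ys a S + zs a S)) := by
  intro x' y' z' r'
  have hW : 0 ≤ ∑ S, wI S * xs S :=
    Finset.sum_nonneg fun S _ => mul_nonneg (hwI S) (hxs S)
  refine ⟨fun S => le_refl 0, fun a S => le_refl 0, ?_, ?_, ?_, ?_, ?_, ?_, ?_⟩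
  · intro a S
    simp only [z']
    split
    · exact le_refl 0
    · have := hzs a S; have := hys a S; have := hxs S; linarith
  · intro a
    simp only [r']
    split
    · exact le_refl 0
    · exact zero_le_one
  · calc ∑ a, p a * r' a
        = ∑ a ∈ Finset.univ.filter (fun a => elem a ≠ ∅), p a := by
          rw [Finset.sum_filter]
          refine Finset.sum_congr rfl fun a _ => ?_
          by_cases h : elem a = ∅ <;> simp [r', h]
      _ ≤ ρ := le_trans hq (min_le_left _ _)
  · intro a e he
    have hne : elem a ≠ ∅ := by
      intro h; rw [h] at he; exact absurd he (Finset.notMem_empty e)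
    have : (0:ℝ) ≤ ∑ S ∈ Finset.univ.filter (fun S => e ∈ Sset S), (x' S + y' a S) :=
      Finset.sum_nonneg fun S _ => by simp [x', y']
    simp only [r', if_neg hne]
    linarith
  · intro a e he
    have hne : elem a ≠ ∅ := by
      intro h; rw [h] at he; exact absurd he (Finset.notMem_empty e)
    have h2 := hcov2 a e he
    calc (1:ℝ) ≤ ∑ S ∈ Finset.univ.filter (fun S => e ∈ Sset S), (xs S + ys a S + zs a S) := h2
      _ = ∑ S ∈ Finset.univ.filter (fun S => e ∈ Sset S), (x' S + y' a S + z' a S) := by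
          refine Finset.sum_congr rfl fun S _ => by simp [x', y', z', if_neg hne]; ring
  · intro a
    simpa [y'] using hB
  · have key : ∀ a, p a * ∑ S, wA a S * (y' a S + z' a S) ≤
        p a * (∑ S, wA a S * (ys a S + zs a S)) +
        (if elem a = ∅ then 0 else p a * (lam * ∑ S, wI S * xs S)) := by
      intro a
      by_cases h : elem a = ∅
      · simp only [y', z', if_pos h]
        simp only [add_zero, mul_zero, Finset.sum_const_zero]
        exact mul_nonneg (hp0 a) (Finset.sum_nonneg fun S _ =>
          mul_nonneg (hwA a S) (add_nonneg (hys a S) (hzs a S)))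
      · simp only [y', z', if_neg h]
        have h1 : ∑ S, wA a S * (0 + (zs a S + ys a S + xs S)) ≤
            (∑ S, wA a S * (ys a S + zs a S)) + lam * ∑ S, wI S * xs S := by
          rw [Finset.mul_sum, ← Finset.sum_add_distrib]
          refine Finset.sum_le_sum fun S _ => ?_
          have := mul_le_mul_of_nonneg_right (hlw a S) (hxs S)
          nlinarith [hxs S]
        calc p a * ∑ S, wA a S * (0 + (zs a S + ys a S + xs S))
            ≤ p a * ((∑ S, wA a S * (ys a S + zs a S)) + lam * ∑ S, wI S * xs S) :=
              mul_le_mul_of_nonneg_left h1 (hp0 a)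
          _ = p a * (∑ S, wA a S * (ys a S + zs a S)) +
              p a * (lam * ∑ S, wI S * xs S) := by ring
    have hsum : ∑ a, p a * ∑ S, wA a S * (y' a S + z' a S) ≤
        (∑ a, p a * ∑ S, wA a S * (ys a S + zs a S)) +
        ∑ a, (if elem a = ∅ then 0 else p a * (lam * ∑ S, wI S * xs S)) := by
      rw [← Finset.sum_add_distrib]
      exact Finset.sum_le_sum fun a _ => key a
    have hfilter : ∑ a, (if elem a = ∅ then 0 else p a * (lam * ∑ S, wI S * xs S)) =
        (∑ a ∈ Finset.univ.filter (fun a => elem a ≠ ∅), p a) * (lam * ∑ S, wI S * xs S) := by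
      rw [Finset.sum_mul, Finset.sum_filter]
      refine Finset.sum_congr rfl fun a _ => ?_
      by_cases h : elem a = ∅ <;> simp [h]
    have hqlam : (∑ a ∈ Finset.univ.filter (fun a => elem a ≠ ∅), p a) * lam ≤ 1 := by
      have h1 : (∑ a ∈ Finset.univ.filter (fun a => elem a ≠ ∅), p a) ≤ 1/lam :=
        le_trans hq (min_le_right _ _)
      calc (∑ a ∈ Finset.univ.filter (fun a => elem a ≠ ∅), p a) * lam
          ≤ (1/lam) * lam := mul_le_mul_of_nonneg_right h1 hlam.le
        _ = 1 := by field_simp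
    have hlast : (∑ a ∈ Finset.univ.filter (fun a => elem a ≠ ∅), p a) *
        (lam * ∑ S, wI S * xs S) ≤ ∑ S, wI S * xs S := by
      rw [← mul_assoc]
      nlinarith [hqlam, hW]
    simp only [x', mul_zero, Finset.sum_const_zero, zero_add]
    calc ∑ a, p a * ∑ S, wA a S * (y' a S + z' a S)
        ≤ (∑ a, p a * ∑ S, wA a S * (ys a S + zs a S)) +
          (∑ a ∈ Finset.univ.filter (fun a => elem a ≠ ∅), p a) *
          (lam * ∑ S, wI S * xs S) := by rw [← hfilter]; exact hsum
      _ ≤ (∑ S, wI S * xs S) + ∑ a, p a * ∑ S, wA a S * (ys a S + zs a S) := by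
          linarith [hlast]
end
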